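/- Let u, w ∈ ℝ≥0ⁿ and α ≥ 1. Suppose that for every k ∈ {1,…,n}, α times the sum of the k smallest coordinates of u is at least the sum of the k smallest coordinates of w. Then for every admissible welfare function W : ℝ≥0ⁿ → ℝ≥0, α·W(u) ≥ W(w). -/

import Mathlib

open Finset

namespace PD

/-- An admissible welfare function on nonnegative vectors: nonnegative,
symmetric, weakly increasing, concave, and normalized at 0. -/
def Admissible (n : ℕ) (W : (Fin n → ℝ) → ℝ) : Prop :=
  (∀ u : Fin n → ℝ, (∀ i, 0 ≤ u i) → 0 ≤ W u) ∧
  (∀ u : Fin n → ℝ, (∀ i, 0 ≤ u i) → ∀ σ : Equiv.Perm (Fin n), W (u ∘ σ) = W u) ∧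
  (∀ u u' : Fin n → ℝ, (∀ i, 0 ≤ u i) → (∀ i, u i ≤ u' i) → W u ≤ W u') ∧
  (∀ u u' : Fin n → ℝ, ∀ t : ℝ, (∀ i, 0 ≤ u i) → (∀ i, 0 ≤ u' i) → 0 ≤ t → t ≤ 1 →
    t * W u + (1 - t) * W u' ≤ W (fun i => t * u i + (1 - t) * u' i)) ∧
  W (fun _ => 0) = 0

/-- The sum of the `k` smallest coordinates of `x`: the minimum of `∑_{i ∈ A} x i`
over subsets `A` of cardinality `k`. -/
noncomputable def kSmallestSum {n : ℕ} (x : Fin n → ℝ) (k : ℕ) : ℝ :=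
  sInf { r : ℝ | ∃ A : Finset (Fin n), A.card = k ∧ r = ∑ i ∈ A, x i }

variable {n : ℕ}

/-- Extension of a tuple to ℕ by zero. -/
def Yext (y : Fin n → ℝ) (j : ℕ) : ℝ := if h : j < n then y ⟨j, h⟩ else 0

/-- Prefix sum of the first `k` coordinates. -/
def pfx (y : Fin n → ℝ) (k : ℕ) : ℝ := ∑ j ∈ Finset.range k, Yext y j

lemma Yext_lt (y : Fin n → ℝ) {j : ℕ} (h : j < n) : Yext y j = y ⟨j, h⟩ := dif_pos h

lemma pfx_filter (y : Fin n → ℝ) {k : ℕ} (hk : k ≤ n) :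
    ∑ i ∈ univ.filter (fun i : Fin n => (i : ℕ) < k), y i = pfx y k := by
  induction k with
  | zero => simp [pfx]
  | succ k ih =>
    have hk' : k ≤ n := by omega
    have hset : univ.filter (fun i : Fin n => (i : ℕ) < k + 1) =
        insert ⟨k, by omega⟩ (univ.filter (fun i : Fin n => (i : ℕ) < k)) := by
      ext i
      simp only [mem_insert, mem_filter, mem_univ, true_and, Fin.ext_iff]
      omega
    rw [hset, Finset.sum_insert (by simp), pfx, Finset.sum_range_succ, ih hk',
      Yext_lt y (show k < n by omega)]
    exact add_comm _ _

lemma card_filter_lt {k : ℕ} (hk : k ≤ n) :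
    (univ.filter (fun i : Fin n => (i : ℕ) < k)).card = k := by
  induction k with
  | zero => simp
  | succ k ih =>
    have hk' : k ≤ n := by omega
    have hset : univ.filter (fun i : Fin n => (i : ℕ) < k + 1) =
        insert ⟨k, by omega⟩ (univ.filter (fun i : Fin n => (i : ℕ) < k)) := by
      ext i
      simp only [mem_insert, mem_filter, mem_univ, true_and, Fin.ext_iff]
      omega
    rw [hset, Finset.card_insert_of_notMem (by simp), ih hk']

lemma pfx_univ (y : Fin n → ℝ) : pfx y n = ∑ i, y i := by
  rw [← pfx_filter y (le_refl n)]
  apply Finset.sum_congr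
  · ext i; simp [i.isLt]
  · intros; rfl

lemma strictMono_le_val {k : ℕ} (g : Fin k → Fin n) (hg : StrictMono g) (j : Fin k) :
    (j : ℕ) ≤ (g j : ℕ) := by
  have H : ∀ m : ℕ, ∀ j : Fin k, (j : ℕ) = m → m ≤ (g j : ℕ) := by
    intro m
    induction m with
    | zero => intro j _; omega
    | succ m ih =>
      intro j hj
      have hm : m < k := by omega
      have h1 : (⟨m, hm⟩ : Fin k) < j := by simp [Fin.lt_def]; omega
      have h2 := hg h1
      have h3 := ih ⟨m, hm⟩ rfl
      simp only [Fin.lt_def] at h2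
      omega
  exact H _ j rfl

lemma pfx_le_sum {y : Fin n → ℝ} (hy : Monotone y) {A : Finset (Fin n)} {k : ℕ}
    (hA : A.card = k) : pfx y k ≤ ∑ i ∈ A, y i := by
  have hk : k ≤ n := by
    rw [← hA]
    simpa using Finset.card_le_card (Finset.subset_univ A)
  have h1 : pfx y k = ∑ j : Fin k, y (Fin.castLE hk j) := by
    rw [pfx, ← Fin.sum_univ_eq_sum_range]
    refine Finset.sum_congr rfl fun j _ => ?_
    rw [Yext_lt y (lt_of_lt_of_le j.isLt hk)]
    rfl
  have h2 : ∑ i ∈ A, y i = ∑ j : Fin k, y (A.orderEmbOfFin hA j) := by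
    rw [← Finset.sum_coe_sort A y, ← Equiv.sum_comp (A.orderIsoOfFin hA).toEquiv (fun x : A => y (x : Fin n))]
    exact Finset.sum_congr rfl fun j _ => by rw [← Finset.coe_orderIsoOfFin_apply A hA j]; rfl
  rw [h1, h2]
  apply Finset.sum_le_sum
  intro j _
  apply hy
  rw [Fin.le_def]
  exact strictMono_le_val _ (A.orderEmbOfFin hA).strictMono j



lemma kSmallest_isLeast (x : Fin n → ℝ) {k : ℕ} (hk : k ≤ n) :
    IsLeast { r : ℝ | ∃ A : Finset (Fin n), A.card = k ∧ r = ∑ i ∈ A, x i }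
      (pfx (x ∘ Tuple.sort x) k) := by
  constructor
  · refine ⟨(univ.filter (fun i : Fin n => (i : ℕ) < k)).map (Tuple.sort x).toEmbedding,
      ?_, ?_⟩
    · rw [Finset.card_map, card_filter_lt hk]
    · rw [Finset.sum_map, pfx_filter _ hk]
      rfl
  · rintro r ⟨A, hA, rfl⟩
    have hB : (A.map (Tuple.sort x).symm.toEmbedding).card = k := by
      rw [Finset.card_map, hA]
    have := pfx_le_sum (Tuple.monotone_sort x) hB
    refine le_trans this (le_of_eq ?_)
    rw [Finset.sum_map]
    exact Finset.sum_congr rfl fun i _ => by simp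

lemma kSmallest_eq (x : Fin n → ℝ) {k : ℕ} (hk : k ≤ n) :
    kSmallestSum x k = pfx (x ∘ Tuple.sort x) k :=
  (kSmallest_isLeast x hk).csInf_eq

lemma kSmallest_le_pfx (x : Fin n → ℝ) {k : ℕ} (hk : k ≤ n) :
    kSmallestSum x k ≤ pfx x k := by
  rw [kSmallest_eq x hk]
  exact (kSmallest_isLeast x hk).2 ⟨_, card_filter_lt hk, (pfx_filter x hk).symm⟩

lemma pfx_smul (a : ℝ) (x : Fin n → ℝ) (k : ℕ) :
    pfx (fun i => a * x i) k = a * pfx x k := by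
  rw [pfx, pfx, Finset.mul_sum]
  refine Finset.sum_congr rfl fun j _ => ?_
  by_cases h : j < n <;> simp [Yext, h]


lemma main_maj (W : (Fin n → ℝ) → ℝ) (hW : Admissible n W)
    (v : Fin n → ℝ) (hvm : Monotone v) (hv0 : ∀ i, 0 ≤ v i) :
    ∀ m : ℕ, ∀ z : Fin n → ℝ, Monotone z → (∀ i, 0 ≤ z i) →
      (∀ k ≤ n, pfx z k ≤ pfx v k) → pfx z n = pfx v n →
      (univ.filter fun i => z i ≠ v i).card = m → W z ≤ W v := by
  obtain ⟨hW0, hWsym, hWmono, hWconc, hWzero⟩ := hW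
  intro m
  induction m using Nat.strong_induction_on with
  | _ m ih =>
  intro z hzm hz0 hple hpn hcard
  by_cases hzv : ∀ i, z i = v i
  · exact le_of_eq (congrArg W (funext hzv))
  have hpuniv : ∀ y : Fin n → ℝ, pfx y n = ∑ i, y i := by
    intro y
    rw [pfx, ← Fin.sum_univ_eq_sum_range (fun j => Yext y j) n]
    exact Finset.sum_congr rfl fun i _ => by rw [Yext_lt y i.isLt]
  have hex : ∃ i, v i < z i := by
    by_contra hcon
    push_neg at hcon
    obtain ⟨i0, hi0⟩ := not_forall.mp hzv
    have hlt : ∑ i, z i < ∑ i, v i :=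
      Finset.sum_lt_sum (fun i _ => hcon i) ⟨i0, mem_univ _, lt_of_le_of_ne (hcon i0) hi0⟩
    rw [← hpuniv, ← hpuniv, hpn] at hlt
    exact lt_irrefl _ hlt
  have hPne : (univ.filter (fun i => v i < z i)).Nonempty := by
    obtain ⟨i, hi⟩ := hex
    exact ⟨i, mem_filter.mpr ⟨mem_univ _, hi⟩⟩
  set p := (univ.filter (fun i => v i < z i)).min' hPne with hpdef
  have hp : v p < z p := (mem_filter.mp (Finset.min'_mem _ hPne)).2
  have hlep : ∀ i : Fin n, i < p → z i ≤ v i := by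
    intro i hip
    by_contra h
    push_neg at h
    exact absurd (Finset.min'_le _ i (mem_filter.mpr ⟨mem_univ _, h⟩)) (not_le.mpr hip)
  have hq_ex : ∃ i, i < p ∧ z i < v i := by
    by_contra hcon
    push_neg at hcon
    have heqbelow : ∀ j : ℕ, j < p.val → Yext z j = Yext v j := by
      intro j hj
      have hjn : j < n := lt_trans hj p.isLt
      rw [Yext_lt z hjn, Yext_lt v hjn]
      have h1 : (⟨j, hjn⟩ : Fin n) < p := hj
      exact le_antisymm (hlep _ h1) (hcon _ h1)
    have h1 : pfx z p.val = pfx v p.val :=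
      Finset.sum_congr rfl fun j hj => heqbelow j (mem_range.mp hj)
    have h2 := hple (p.val + 1) (by omega)
    rw [pfx, pfx, Finset.sum_range_succ, Finset.sum_range_succ,
      Yext_lt z p.isLt, Yext_lt v p.isLt] at h2
    simp only [Fin.eta] at h2
    rw [pfx, pfx] at h1
    linarith [hp]
  have hQne : (univ.filter (fun i => i < p ∧ z i < v i)).Nonempty := by
    obtain ⟨i, hi1, hi2⟩ := hq_ex
    exact ⟨i, mem_filter.mpr ⟨mem_univ _, hi1, hi2⟩⟩
  set q := (univ.filter (fun i => i < p ∧ z i < v i)).max' hQne with hqdef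
  have hq : q < p ∧ z q < v q := (mem_filter.mp (Finset.max'_mem _ hQne)).2
  have hmid : ∀ i, q < i → i < p → z i = v i := by
    intro i h1 h2
    by_contra hne
    have hlt : z i < v i := lt_of_le_of_ne (hlep i h2) hne
    exact absurd (Finset.le_max' _ i (mem_filter.mpr ⟨mem_univ _, h2, hlt⟩)) (not_le.mpr h1)
  have hqp : q ≠ p := ne_of_lt hq.1
  set δ := min (z p - v p) (v q - z q) with hδdef
  have hδpos : 0 < δ := lt_min (by linarith [hp]) (by linarith [hq.2])
  have hδ1 : δ ≤ z p - v p := min_le_left _ _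
  have hδ2 : δ ≤ v q - z q := min_le_right _ _
  have hvq_le_vp : v q ≤ v p := hvm (le_of_lt hq.1)
  set z' := fun i => if i = p then z p - δ else if i = q then z q + δ else z i with hz'def
  have hz'p : z' p = z p - δ := if_pos rfl
  have hz'q : z' q = z q + δ := by simp [hz'def, hqp]
  have hz'other : ∀ i, i ≠ p → i ≠ q → z' i = z i := by
    intro i h1 h2; simp [hz'def, h1, h2]
  have hz'm : Monotone z' := by
    intro i j hij
    rcases eq_or_lt_of_le hij with rfl | hij
    · exact le_refl _
    by_cases hip : i = p
    · have hpj : p < j := by rw [← hip]; exact hij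
      have hjp : j ≠ p := ne_of_gt hpj
      have hjq : j ≠ q := ne_of_gt (lt_trans hq.1 hpj)
      rw [hip, hz'p, hz'other j hjp hjq]
      have h3 : z p ≤ z j := hzm (le_of_lt hpj)
      linarith [hδpos]
    by_cases hiq : i = q
    · have hqj : q < j := by rw [← hiq]; exact hij
      rw [hiq, hz'q]
      by_cases hjp : j = p
      · rw [hjp, hz'p]
        linarith [hδ1, hδ2, hvq_le_vp]
      · have hjq : j ≠ q := ne_of_gt hqj
        rw [hz'other j hjp hjq]
        rcases lt_or_gt_of_ne hjp with hjlt | hjgt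
        · have h4 : z j = v j := hmid j hqj hjlt
          have h5 : v q ≤ v j := hvm (le_of_lt hqj)
          linarith [hδ2]
        · have h4 : z p ≤ z j := hzm (le_of_lt hjgt)
          linarith [hδ2, hvq_le_vp, hp]
    · rw [hz'other i hip hiq]
      by_cases hjp : j = p
      · have hipp : i < p := by rw [← hjp]; exact hij
        rw [hjp, hz'p]
        have h1 : z i ≤ v i := hlep i hipp
        have h2 : v i ≤ v p := hvm (le_of_lt hipp)
        linarith [hδ1]
      by_cases hjq : j = q
      · rw [hjq, hz'q]
        have h3 : z i ≤ z j := hzm (le_of_lt hij)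
        rw [hjq] at h3
        linarith [hδpos]
      · rw [hz'other j hjp hjq]
        exact hzm (le_of_lt hij)
  have hz'0 : ∀ i, 0 ≤ z' i := by
    intro i
    by_cases hip : i = p
    · rw [hip, hz'p]; linarith [hv0 p, hδ1]
    by_cases hiq : i = q
    · rw [hiq, hz'q]; linarith [hz0 q, hδpos.le]
    · rw [hz'other i hip hiq]; exact hz0 i
  have hqvpv : (q : ℕ) ≠ (p : ℕ) := fun h => hqp (Fin.ext h)
  have hYz' : ∀ j : ℕ, Yext z' j =
      Yext z j + ((if j = (q : ℕ) then δ else 0) - (if j = (p : ℕ) then δ else 0)) := by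
    intro j
    by_cases hjn : j < n
    · rw [Yext_lt _ hjn, Yext_lt _ hjn]
      by_cases hjp : j = (p : ℕ)
      · have hep : (⟨j, hjn⟩ : Fin n) = p := Fin.ext hjp
        have hjq : j ≠ (q : ℕ) := by omega
        rw [hep, hz'p]
        simp only [hjp, hjq, if_true, if_false, ite_true, ite_false, if_neg hjq, if_pos rfl]
        rw [if_neg (Ne.symm hqvpv)]
        ring
      by_cases hjq : j = (q : ℕ)
      · have heq : (⟨j, hjn⟩ : Fin n) = q := Fin.ext hjq
        rw [heq, hz'q]
        simp only [hjp, hjq, if_neg hjp, if_pos rfl]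
        rw [if_pos trivial, if_neg hqvpv]
        ring
      · rw [hz'other ⟨j, hjn⟩ (fun h => hjp (by rw [← h])) (fun h => hjq (by rw [← h]))]
        simp only [if_neg hjp, if_neg hjq]
        ring
    · have h1 : j ≠ (q : ℕ) := by have := q.isLt; omega
      have h2 : j ≠ (p : ℕ) := by have := p.isLt; omega
      simp [Yext, hjn, h1, h2]
  have hpfx' : ∀ k, pfx z' k =
      pfx z k + ((if (q : ℕ) < k then δ else 0) - (if (p : ℕ) < k then δ else 0)) := by
    intro k
    rw [pfx, pfx, Finset.sum_congr rfl (fun j _ => hYz' j), Finset.sum_add_distrib,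
      Finset.sum_sub_distrib, Finset.sum_ite_eq' (Finset.range k) (q : ℕ) (fun _ => δ),
      Finset.sum_ite_eq' (Finset.range k) (p : ℕ) (fun _ => δ)]
    simp only [Finset.mem_range]
  have hkey : ∀ k, q.val + 1 ≤ k → k ≤ p.val → v q - z q ≤ pfx v k - pfx z k := by
    intro k hk1
    induction k, hk1 using Nat.le_induction with
    | base =>
      intro _
      have h1 := hple q.val (by have := q.isLt; omega)
      rw [pfx, pfx] at h1
      rw [pfx, pfx, Finset.sum_range_succ, Finset.sum_range_succ,
        Yext_lt v q.isLt, Yext_lt z q.isLt]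
      simp only [Fin.eta]
      linarith
    | succ k hk ihk =>
      intro h
      have hkn : k < n := by have := p.isLt; omega
      have hmk : z ⟨k, hkn⟩ = v ⟨k, hkn⟩ := by
        refine hmid _ ?_ ?_
        · simp only [Fin.lt_def]; omega
        · simp only [Fin.lt_def]; omega
      have h2 := ihk (by omega)
      rw [pfx, pfx] at h2
      rw [pfx, pfx, Finset.sum_range_succ, Finset.sum_range_succ,
        Yext_lt v hkn, Yext_lt z hkn, hmk]
      linarith
  have hple' : ∀ k ≤ n, pfx z' k ≤ pfx v k := by
    intro k hk
    rw [hpfx' k]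
    by_cases h1 : q.val < k
    · by_cases h2 : p.val < k
      · simp only [h1, h2, if_pos]
        have := hple k hk
        linarith
      · have := hkey k (by omega) (by omega)
        simp only [h1, if_pos, h2, if_neg, not_false_iff]
        linarith [hδ2]
    · have h2 : ¬ p.val < k := by have := hq.1; simp only [Fin.lt_def] at this; omega
      simp only [h1, h2, if_neg, not_false_iff]
      have := hple k hk
      linarith
  have hpn' : pfx z' n = pfx v n := by
    rw [hpfx' n]
    have h1 : q.val < n := q.isLt
    have h2 : p.val < n := p.isLt
    simp only [h1, h2, if_pos]
    linarith [hpn]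
  have hzqp : z q < z p := by linarith [hq.2, hvq_le_vp, hp]
  have hd : (0:ℝ) < z p - z q := by linarith
  set t := 1 - δ / (z p - z q) with htdef
  have hδd : δ ≤ z p - z q := by linarith [hδ1, hvq_le_vp, hq.2]
  have ht0 : 0 ≤ t := by
    rw [htdef, sub_nonneg]
    exact (div_le_one hd).mpr hδd
  have ht1 : t ≤ 1 := by
    have : 0 ≤ δ / (z p - z q) := div_nonneg hδpos.le hd.le
    rw [htdef]; linarith
  have hzs0 : ∀ i, 0 ≤ (z ∘ (Equiv.swap q p)) i := fun i => hz0 _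
  have hcomb := hWconc z (z ∘ (Equiv.swap q p)) t hz0 hzs0 ht0 ht1
  have hWzs : W (z ∘ (Equiv.swap q p)) = W z := hWsym z hz0 (Equiv.swap q p)
  have hfun : (fun i => t * z i + (1 - t) * (z ∘ (Equiv.swap q p)) i) = z' := by
    funext i
    have hne : z p - z q ≠ 0 := ne_of_gt hd
    have h1t : (1 : ℝ) - t = δ / (z p - z q) := by rw [htdef]; ring
    by_cases hip : i = p
    · have hsw : (Equiv.swap q p) p = q := Equiv.swap_apply_right q p
      rw [hip, hz'p]
      simp only [Function.comp_apply, hsw, htdef]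
      field_simp
      ring
    by_cases hiq : i = q
    · have hsw : (Equiv.swap q p) q = p := Equiv.swap_apply_left q p
      rw [hiq, hz'q]
      simp only [Function.comp_apply, hsw, htdef]
      field_simp
      ring
    · rw [hz'other i hip hiq]
      have hsw : (Equiv.swap q p) i = i := Equiv.swap_apply_of_ne_of_ne hiq hip
      simp only [Function.comp_apply, hsw]
      ring
  rw [hfun, hWzs] at hcomb
  have hWzz' : W z ≤ W z' := by
    have h1 : t * W z + (1 - t) * W z = W z := by ring
    linarith
  have hsub : (univ.filter fun i => z' i ≠ v i) ⊆ (univ.filter fun i => z i ≠ v i) := by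
    intro i hi
    rw [mem_filter] at hi ⊢
    refine ⟨mem_univ _, ?_⟩
    by_cases hip : i = p
    · rw [hip]; exact hp.ne'
    by_cases hiq : i = q
    · rw [hiq]; exact hq.2.ne
    · rw [hz'other i hip hiq] at hi
      exact hi.2
  have hstrict : (univ.filter fun i => z' i ≠ v i) ⊂ (univ.filter fun i => z i ≠ v i) := by
    rw [Finset.ssubset_iff_of_subset hsub]
    rcases min_cases (z p - v p) (v q - z q) with ⟨heq, _⟩ | ⟨heq, _⟩
    · refine ⟨p, mem_filter.mpr ⟨mem_univ _, hp.ne'⟩, ?_⟩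
      rw [mem_filter]
      push_neg
      intro _
      rw [hz'p, hδdef, heq]
      ring
    · refine ⟨q, mem_filter.mpr ⟨mem_univ _, hq.2.ne⟩, ?_⟩
      rw [mem_filter]
      push_neg
      intro _
      rw [hz'q, hδdef, heq]
      ring
  have hcard' := Finset.card_lt_card hstrict
  refine le_trans hWzz' (ih (univ.filter fun i => z' i ≠ v i).card (by omega) z'
    hz'm hz'0 hple' hpn' rfl)

lemma exists_z (w v : Fin n → ℝ) (h : ∀ k ≤ n, pfx w k ≤ pfx v k) :
    ∃ z : Fin n → ℝ, (∀ i, w i ≤ z i) ∧ (∀ k ≤ n, pfx z k ≤ pfx v k) ∧ pfx z n = pfx v n := by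
  classical
  set d : ℕ → ℝ := fun k => pfx v k - pfx w k with hddef
  have hd0 : ∀ k ≤ n, 0 ≤ d k := by
    intro k hk
    have := h k hk
    simp only [hddef]
    linarith
  set Δ : ℕ → ℝ := fun k =>
    if hkn : k ≤ n then (Finset.Icc k n).inf' (Finset.nonempty_Icc.mpr hkn) d else 0 with hΔdef
  have hΔle : ∀ k, ∀ (hk : k ≤ n), ∀ j ∈ Finset.Icc k n, Δ k ≤ d j := by
    intro k hk j hj
    simp only [hΔdef, dif_pos hk]
    exact Finset.inf'_le d hj
  have hΔmem : ∀ k, ∀ (hk : k ≤ n), ∃ j ∈ Finset.Icc k n, Δ k = d j := by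
    intro k hk
    simp only [hΔdef, dif_pos hk]
    exact Finset.exists_mem_eq_inf' _ d
  have hd00 : d 0 = 0 := by simp [hddef, pfx]
  have hΔ0 : Δ 0 = 0 := by
    have h1 := hΔle 0 (Nat.zero_le n) 0 (Finset.mem_Icc.mpr ⟨le_refl 0, Nat.zero_le n⟩)
    obtain ⟨j, hj, hjeq⟩ := hΔmem 0 (Nat.zero_le n)
    have h2 : 0 ≤ d j := hd0 j (Finset.mem_Icc.mp hj).2
    rw [hd00] at h1
    linarith [hjeq ▸ h2]
  have hΔmono : ∀ k k', k ≤ k' → k' ≤ n → Δ k ≤ Δ k' := by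
    intro k k' hkk hk'
    obtain ⟨j, hj, hjeq⟩ := hΔmem k' hk'
    rw [hjeq]
    refine hΔle k (le_trans hkk hk') j ?_
    rw [Finset.mem_Icc] at hj ⊢
    omega
  have hΔn : Δ n = d n := by
    simp only [hΔdef, dif_pos (le_refl n), Finset.Icc_self, Finset.inf'_singleton]
  have hz : ∀ k ≤ n, pfx (fun i : Fin n => w i + (Δ (i.val + 1) - Δ i.val)) k
      = pfx w k + Δ k := by
    intro k hk
    rw [pfx, pfx]
    have hcg : ∀ j ∈ Finset.range k,
        Yext (fun i : Fin n => w i + (Δ (i.val + 1) - Δ i.val)) j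
          = Yext w j + (Δ (j + 1) - Δ j) := by
      intro j hj
      have hjn : j < n := lt_of_lt_of_le (mem_range.mp hj) hk
      rw [Yext_lt _ hjn, Yext_lt _ hjn]
    rw [Finset.sum_congr rfl hcg, Finset.sum_add_distrib, Finset.sum_range_sub Δ k, hΔ0]
    ring
  refine ⟨fun i => w i + (Δ (i.val + 1) - Δ i.val), ?_, ?_, ?_⟩
  · intro i
    have h1 : Δ i.val ≤ Δ (i.val + 1) := hΔmono _ _ (by omega) i.isLt
    dsimp only
    linarith
  · intro k hk
    rw [hz k hk]
    have h1 := hΔle k hk k (Finset.mem_Icc.mpr ⟨le_refl k, hk⟩)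
    simp only [hddef] at h1
    linarith
  · rw [hz n (le_refl n), hΔn]
    show pfx w n + (pfx v n - pfx w n) = pfx v n
    ring


lemma scale_le (W : (Fin n → ℝ) → ℝ) (hW : Admissible n W)
    (u : Fin n → ℝ) (hu : ∀ i, 0 ≤ u i) {α : ℝ} (hα : 1 ≤ α) :
    W (fun i => α * u i) ≤ α * W u := by
  obtain ⟨hW0, hWsym, hWmono, hWconc, hWzero⟩ := hW
  have hα0 : (0:ℝ) < α := lt_of_lt_of_le one_pos hα
  have h1 := hWconc (fun i => α * u i) (fun _ => 0) (1/α)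
    (fun i => mul_nonneg hα0.le (hu i)) (fun _ => le_refl 0)
    (by positivity) (by rw [div_le_one hα0]; exact hα)
  rw [hWzero] at h1
  have h2 : (fun i => (1/α) * ((fun i => α * u i) i) + (1 - 1/α) * ((fun _ => (0:ℝ)) i)) = u := by
    funext i
    field_simp
    ring
  rw [h2] at h1
  have h3 : (1/α) * W (fun i => α * u i) ≤ W u := by linarith
  calc W (fun i => α * u i) = α * ((1/α) * W (fun i => α * u i)) := by field_simp
    _ ≤ α * W u := mul_le_mul_of_nonneg_left h3 hα0.le


theorem stmt2 (n : ℕ) (u w : Fin n → ℝ)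
    (hu : ∀ i, 0 ≤ u i) (hw : ∀ i, 0 ≤ w i)
    (α : ℝ) (hα : 1 ≤ α)
    (hmaj : ∀ k : ℕ, 1 ≤ k → k ≤ n → kSmallestSum w k ≤ α * kSmallestSum u k)
    (W : (Fin n → ℝ) → ℝ) (hW : Admissible n W) :
    W w ≤ α * W u := by
  classical
  have hWc := hW
  have hα0 : (0:ℝ) < α := lt_of_lt_of_le one_pos hα
  set w' := w ∘ Tuple.sort w with hw'def
  set u' := u ∘ Tuple.sort u with hu'def
  have hw'm : Monotone w' := Tuple.monotone_sort w
  have hu'm : Monotone u' := Tuple.monotone_sort u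
  have hw'0 : ∀ i, 0 ≤ w' i := fun i => hw _
  have hu'0 : ∀ i, 0 ≤ u' i := fun i => hu _
  set v : Fin n → ℝ := fun i => α * u' i with hvdef
  have hpv : ∀ k, pfx v k = α * pfx u' k := fun k => pfx_smul α u' k
  have hvm : Monotone v := fun i j hij => by
    simp only [hvdef]
    exact mul_le_mul_of_nonneg_left (hu'm hij) hα0.le
  have hv0 : ∀ i, 0 ≤ v i := fun i => mul_nonneg hα0.le (hu'0 i)
  have hple : ∀ k ≤ n, pfx w' k ≤ pfx v k := by
    intro k hk
    rcases Nat.eq_zero_or_pos k with rfl | hk1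
    · simp [pfx]
    · have h1 := hmaj k hk1 hk
      rw [kSmallest_eq w hk, kSmallest_eq u hk] at h1
      rw [hpv k]
      exact h1
  obtain ⟨z, hwz, hzle, hzn⟩ := exists_z w' v hple
  have hz0 : ∀ i, 0 ≤ z i := fun i => le_trans (hw'0 i) (hwz i)
  set z' := z ∘ Tuple.sort z with hz'def
  have hz'm : Monotone z' := Tuple.monotone_sort z
  have hz'0 : ∀ i, 0 ≤ z' i := fun i => hz0 _
  have hz'le : ∀ k ≤ n, pfx z' k ≤ pfx v k := by
    intro k hk
    have h1 : pfx z' k = kSmallestSum z k := (kSmallest_eq z hk).symm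
    rw [h1]
    exact le_trans (kSmallest_le_pfx z hk) (hzle k hk)
  have hz'n : pfx z' n = pfx v n := by
    have h1 : ∑ i, z' i = ∑ i, z i := Equiv.sum_comp (Tuple.sort z) z
    rw [pfx_univ z', h1, ← pfx_univ z]
    exact hzn
  have hWmaj := main_maj W hWc v hvm hv0 _ z' hz'm hz'0 hz'le hz'n rfl
  have c5 : W v ≤ α * W u' := scale_le W hWc u' hu'0 hα
  obtain ⟨hW0, hWsym, hWmono, hWconc, hWzero⟩ := hW
  have c1 : W w = W w' := (hWsym w hw (Tuple.sort w)).symm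
  have c2 : W w' ≤ W z := hWmono w' z hw'0 hwz
  have c3 : W z = W z' := (hWsym z hz0 (Tuple.sort z)).symm
  have c6 : W u' = W u := hWsym u hu (Tuple.sort u)
  rw [c1, ← c6]
  linarith

end PD
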